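/- arXiv:2109.08210 — 2 statements merged into one kernel-verified Lean document; each statement's English description precedes it below -/
import Mathlib

section
/- For every integer m ≥ 0, 2^m = Σ_{j=2}^{m+2} (−1)^{m−j} · S(m+1, j−1) · (j!/2), where S denotes the Stirling number of the second kind. -/
/-- Stirling numbers of the second kind: `stirling ℓ k` is the number of partitions of an
`ℓ`-element set into `k` nonempty blocks. -/
def stirling : ℕ → ℕ → ℕ
  | 0, 0 => 1
  | 0, _ + 1 => 0
  | _ + 1, 0 => 0
  | l + 1, k + 1 => (k + 1) * stirling l (k + 1) + stirling l k

lemma stirling_eq_zero : ∀ n k, n < k → stirling n k = 0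
  | 0, k + 1, _ => rfl
  | n + 1, k + 1, h => by
      have h1 : stirling n (k + 1) = 0 := stirling_eq_zero n (k + 1) (by omega)
      have h2 : stirling n k = 0 := stirling_eq_zero n k (by omega)
      simp [stirling, h1, h2]

lemma key : ∀ n : ℕ, ∑ k ∈ Finset.range (n + 2),
    (-1 : ℤ) ^ (n + k) * stirling n k * (Nat.factorial (k + 1) : ℤ) = 2 ^ n := by
  intro n
  induction n with
  | zero => decide
  | succ n ih =>
    have hshift := Finset.sum_range_succ'
      (fun k => (-1 : ℤ) ^ (n + 1 + k) * stirling (n + 1) k * (Nat.factorial (k + 1) : ℤ))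
      (n + 2)
    rw [hshift]
    have h0 : stirling (n + 1) 0 = 0 := rfl
    rw [h0]
    simp only [Nat.cast_zero, mul_zero, zero_mul, add_zero]
    -- u k = (-1)^(n+k+1) * k * stirling n k * (k+1)!
    set u : ℕ → ℤ := fun k => (-1 : ℤ) ^ (n + k + 1) * k * stirling n k * (Nat.factorial (k + 1) : ℤ) with hu
    have hterm : ∀ k ∈ Finset.range (n + 2),
        (-1 : ℤ) ^ (n + 1 + (k + 1)) * stirling (n + 1) (k + 1) * (Nat.factorial (k + 1 + 1) : ℤ)
        = 2 * ((-1 : ℤ) ^ (n + k) * stirling n k * (Nat.factorial (k + 1) : ℤ)) + (u (k + 1) - u k) := by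
      intro k _
      have hs : stirling (n + 1) (k + 1) = (k + 1) * stirling n (k + 1) + stirling n k := rfl
      have hf2 : Nat.factorial (k + 2) = (k + 2) * Nat.factorial (k + 1) := rfl
      rw [hs, hu]
      push_cast [hf2]
      ring
    rw [Finset.sum_congr rfl hterm, Finset.sum_add_distrib, Finset.sum_range_sub, ← Finset.mul_sum, ih]
    have hun : u (n + 2) = 0 := by
      simp [hu, stirling_eq_zero n (n + 2) (by omega)]
    have hu0 : u 0 = 0 := by simp [hu]
    rw [hun, hu0]
    ring

theorem stmt_4 (m : ℕ) :
    (2 ^ m : ℤ) =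
      ∑ j ∈ Finset.Icc 2 (m + 2),
        (-1 : ℤ) ^ (m + j) * stirling (m + 1) (j - 1) * ((Nat.factorial j / 2 : ℕ) : ℤ) := by
  have hkey := key (m + 1)
  -- shift key sum: drop k = 0 term
  rw [Finset.sum_range_succ' _ (m + 2)] at hkey
  have h0 : stirling (m + 1) 0 = 0 := rfl
  rw [h0] at hkey
  simp only [Nat.cast_zero, mul_zero, zero_mul, add_zero] at hkey
  -- drop top term k = m+1 from the shifted sum
  rw [Finset.sum_range_succ] at hkey
  rw [stirling_eq_zero (m + 1) (m + 2) (by omega)] at hkey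
  simp only [Nat.cast_zero, mul_zero, zero_mul, add_zero] at hkey
  -- rewrite goal sum over Icc as range
  rw [← Finset.Ico_add_one_right_eq_Icc, Finset.sum_Ico_eq_sum_range]
  have hidx : m + 2 + 1 - 2 = m + 1 := by omega
  rw [hidx]
  refine mul_left_cancel₀ (two_ne_zero (α := ℤ)) ?_
  rw [Finset.mul_sum, show (2:ℤ) * 2 ^ m = 2 ^ (m+1) by ring, ← hkey]
  refine Finset.sum_congr rfl fun k _ => ?_
  have hd : (Nat.factorial (2 + k) / 2) * 2 = Nat.factorial (2 + k) :=
    Nat.div_mul_cancel (Nat.dvd_factorial (by norm_num) (by omega))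
  have h1 : 2 + k - 1 = k + 1 := by omega
  have h2 : (2 : ℕ) + k = k + 2 := by omega
  rw [h1]
  have : ((Nat.factorial (2 + k) : ℤ)) = ((Nat.factorial (2 + k) / 2 : ℕ) : ℤ) * 2 := by
    rw_mod_cast [hd]
  rw [h2] at this ⊢
  rw [this, show m + 1 + (k + 1) = m + k + 2 by ring, show m + (k + 2) = m + k + 2 by ring]
  ring
end

section
/- Fix m, n ≥ 0 and a proper subset A ⊊ {0,...,m}. The number of saturated covers S on [m] × [n+1] with c(S) = A equals s(|A|, n), the number of saturated covers on [|A|] × [n]. If A = {0,...,m}, the number of saturated covers with c(S) = A equals s(m, n). -/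
/-- A saturated cover on the grid `[m] × [n] = {0,…,m} × {0,…,n}`.
`H i j = true` means the horizontal edge `(i,j) → (i+1,j)` is present (valid for `i < m`, `j ≤ n`);
`V i j = true` means the vertical edge `(i,j) → (i,j+1)` is present (valid for `i ≤ m`, `j < n`). -/
structure SatCover (m n : ℕ) where
  H : ℕ → ℕ → Bool
  V : ℕ → ℕ → Bool
  H_bound : ∀ i j, H i j = true → i < m ∧ j ≤ n
  V_bound : ∀ i j, V i j = true → i ≤ m ∧ j < n
  H_down : ∀ i j k, k < j → H i j = true → H i k = true
  V_left : ∀ i j k, k < i → V i j = true → V k j = true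
  sq₁ : ∀ i j, H i j = true → H i (j+1) = true → V i j = true → V (i+1) j = true
  sq₂ : ∀ i j, H i j = true → H i (j+1) = true → V (i+1) j = true → V i j = true
  sq₃ : ∀ i j, H i j = true → V i j = true → V (i+1) j = true → H i (j+1) = true
  sq₄ : ∀ i j, H i (j+1) = true → V i j = true → V (i+1) j = true → H i j = true

/-- `satCount m n` is the number of saturated covers on `[m] × [n]`. -/
noncomputable def satCount (m n : ℕ) : ℕ := Nat.card (SatCover m n)

/-- The set `c(S) ⊆ {0,…,m}` associated to a saturated cover `S` on `[m] × [n+1]`: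
with `k` the largest index such that the vertical edge `(k,n) → (k,n+1)` is in `S`
(`k = -1` if none), `c(S) = {0,…,k} ∪ {i : i > k + 1 and (i-1,n+1) → (i,n+1) ∉ S}`.
(Membership `i ≤ k` is equivalent to `V i n`, and `i > k + 1` to `1 ≤ i ∧ ¬ V (i-1) n`.) -/
def cset (m n : ℕ) (S : SatCover m (n + 1)) : Finset ℕ :=
  (Finset.range (m + 1)).filter
    (fun i => S.V i n = true ∨
      (1 ≤ i ∧ S.V (i - 1) n = false ∧ S.H (i - 1) (n + 1) = false))

/-! ### Threshold representation -/

/-- Threshold representation of a saturated cover. -/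
structure Cov (m n : ℕ) where
  a : ℕ → ℕ
  b : ℕ → ℕ
  ha : ∀ i, a i ≤ n + 1
  ha' : ∀ i, m ≤ i → a i = 0
  hb : ∀ j, b j ≤ m + 1
  hb' : ∀ j, n ≤ j → b j = 0
  c1 : ∀ i j, b j = i + 1 → a i ≤ j + 1
  c2 : ∀ i j, a i = j + 1 → b j ≤ i + 1

lemma Cov.ext' {m n : ℕ} {C D : Cov m n} (h1 : C.a = D.a) (h2 : C.b = D.b) : C = D := by
  cases C; cases D; simp_all

lemma SatCover.ext' {m n : ℕ} {S T : SatCover m n} (h1 : S.H = T.H) (h2 : S.V = T.V) :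
    S = T := by
  cases S; cases T; simp_all

lemma count_iff_aux (p : ℕ → Bool) (N : ℕ) (hdc : ∀ j k, k < j → p j = true → p k = true)
    (hbd : ∀ j, p j = true → j < N) (j : ℕ) :
    p j = true ↔ j < ((Finset.range N).filter (fun x => p x = true)).card := by
  constructor
  · intro hj
    have hsub : Finset.range (j + 1) ⊆ (Finset.range N).filter (fun x => p x = true) := by
      intro x hx
      rw [Finset.mem_range] at hx
      have hpx : p x = true := by
        rcases Nat.lt_or_ge x j with h | h
        · exact hdc j x h hj
        · have : x = j := by omega
          rwa [this]
      exact Finset.mem_filter.2 ⟨Finset.mem_range.2 (lt_of_lt_of_le (hbd x hpx) le_rfl), hpx⟩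
    have := Finset.card_le_card hsub
    simpa using lt_of_lt_of_le (Nat.lt_succ_self j) (by simpa using this)
  · intro hj
    by_contra hpj
    have hsub : (Finset.range N).filter (fun x => p x = true) ⊆ Finset.range j := by
      intro x hx
      rw [Finset.mem_filter] at hx
      rw [Finset.mem_range]
      by_contra hxj
      push_neg at hxj
      rcases Nat.lt_or_ge j x with h | h
      · exact hpj (hdc x j h hx.2)
      · have : x = j := by omega
        rw [this] at hx
        exact hpj hx.2
    have := Finset.card_le_card hsub
    simp only [Finset.card_range] at this
    omega

/-- Horizontal threshold. -/
def aOf {m n : ℕ} (S : SatCover m n) (i : ℕ) : ℕ :=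
  ((Finset.range (n + 2)).filter (fun j => S.H i j = true)).card

/-- Vertical threshold. -/
def bOf {m n : ℕ} (S : SatCover m n) (j : ℕ) : ℕ :=
  ((Finset.range (m + 2)).filter (fun i => S.V i j = true)).card

lemma H_iff {m n : ℕ} (S : SatCover m n) (i j : ℕ) : S.H i j = true ↔ j < aOf S i :=
  count_iff_aux _ _ (fun a b hb ha => S.H_down i a b hb ha)
    (fun a ha => by have := (S.H_bound i a ha).2; omega) j

lemma V_iff {m n : ℕ} (S : SatCover m n) (i j : ℕ) : S.V i j = true ↔ i < bOf S j :=
  count_iff_aux _ _ (fun a b hb ha => S.V_left a j b hb ha)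
    (fun a ha => by have := (S.V_bound a j ha).1; omega) i

lemma aOf_le {m n : ℕ} (S : SatCover m n) (i : ℕ) : aOf S i ≤ n + 1 := by
  by_contra h
  push_neg at h
  have : S.H i (n + 1) = true := (H_iff S i (n + 1)).2 (by omega)
  have := (S.H_bound i (n + 1) this).2
  omega

lemma bOf_le {m n : ℕ} (S : SatCover m n) (j : ℕ) : bOf S j ≤ m + 1 := by
  by_contra h
  push_neg at h
  have : S.V (m + 1) j = true := (V_iff S (m + 1) j).2 (by omega)
  have := (S.V_bound (m + 1) j this).1
  omega

lemma aOf_zero {m n : ℕ} (S : SatCover m n) (i : ℕ) (h : m ≤ i) : aOf S i = 0 := by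
  by_contra hc
  have : S.H i 0 = true := (H_iff S i 0).2 (by omega)
  have := (S.H_bound i 0 this).1
  omega

lemma bOf_zero {m n : ℕ} (S : SatCover m n) (j : ℕ) (h : n ≤ j) : bOf S j = 0 := by
  by_contra hc
  have : S.V 0 j = true := (V_iff S 0 j).2 (by omega)
  have := (S.V_bound 0 j this).2
  omega

/-- From a saturated cover to its threshold representation. -/
def toCov {m n : ℕ} (S : SatCover m n) : Cov m n where
  a := aOf S
  b := bOf S
  ha := aOf_le S
  ha' := aOf_zero S
  hb := bOf_le S
  hb' := bOf_zero S
  c1 := by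
    intro i j hbj
    by_contra h
    push_neg at h
    have h1 : S.H i j = true := (H_iff S i j).2 (by omega)
    have h2 : S.H i (j + 1) = true := (H_iff S i (j + 1)).2 (by omega)
    have h3 : S.V i j = true := (V_iff S i j).2 (by omega)
    have h4 := S.sq₁ i j h1 h2 h3
    have := (V_iff S (i + 1) j).1 h4
    omega
  c2 := by
    intro i j haj
    by_contra h
    push_neg at h
    have h1 : S.H i j = true := (H_iff S i j).2 (by omega)
    have h3 : S.V i j = true := (V_iff S i j).2 (by omega)
    have h4 : S.V (i + 1) j = true := (V_iff S (i + 1) j).2 (by omega)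
    have h5 := S.sq₃ i j h1 h3 h4
    have := (H_iff S i (j + 1)).1 h5
    omega

/-- From a threshold representation back to a saturated cover. -/
def toSat {m n : ℕ} (C : Cov m n) : SatCover m n where
  H i j := decide (j < C.a i)
  V i j := decide (i < C.b j)
  H_bound := by
    intro i j h
    rw [decide_eq_true_eq] at h
    have h1 := C.ha i
    have h2 : ¬ m ≤ i := fun hm => by have := C.ha' i hm; omega
    omega
  V_bound := by
    intro i j h
    rw [decide_eq_true_eq] at h
    have h1 := C.hb j
    have h2 : ¬ n ≤ j := fun hm => by have := C.hb' j hm; omega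
    omega
  H_down := by intro i j k hk h; rw [decide_eq_true_eq] at *; omega
  V_left := by intro i j k hk h; rw [decide_eq_true_eq] at *; omega
  sq₁ := by
    intro i j h1 h2 h3
    rw [decide_eq_true_eq] at *
    have : C.b j ≠ i + 1 := fun hc => by have := C.c1 i j hc; omega
    omega
  sq₂ := by intro i j h1 h2 h3; rw [decide_eq_true_eq] at *; omega
  sq₃ := by
    intro i j h1 h2 h3
    rw [decide_eq_true_eq] at *
    have : C.a i ≠ j + 1 := fun hc => by have := C.c2 i j hc; omega
    omega
  sq₄ := by intro i j h1 h2 h3; rw [decide_eq_true_eq] at *; omega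

lemma bool_eq_of_iff {x y : Bool} (h : x = true ↔ y = true) : x = y := by
  cases x <;> cases y <;> simp_all

/-- The equivalence between saturated covers and threshold representations. -/
def covEquiv (m n : ℕ) : SatCover m n ≃ Cov m n where
  toFun := toCov
  invFun := toSat
  left_inv S := by
    apply SatCover.ext'
    · funext i j
      apply bool_eq_of_iff
      show (decide (j < aOf S i) = true) ↔ _
      rw [decide_eq_true_eq, ← H_iff]
    · funext i j
      apply bool_eq_of_iff
      show (decide (i < bOf S j) = true) ↔ _
      rw [decide_eq_true_eq, ← V_iff]
  right_inv C := by
    apply Cov.ext'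
    · funext i
      show aOf (toSat C) i = C.a i
      unfold aOf
      have hfe : (Finset.range (n + 2)).filter (fun j => (toSat C).H i j = true) =
          Finset.range (C.a i) := by
        ext x
        simp only [Finset.mem_filter, Finset.mem_range, toSat, decide_eq_true_eq]
        have := C.ha i
        omega
      rw [hfe, Finset.card_range]
    · funext j
      show bOf (toSat C) j = C.b j
      unfold bOf
      have hfe : (Finset.range (m + 2)).filter (fun i => (toSat C).V i j = true) =
          Finset.range (C.b j) := by
        ext x
        simp only [Finset.mem_filter, Finset.mem_range, toSat, decide_eq_true_eq]
        have := C.hb j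
        omega
      rw [hfe, Finset.card_range]

/-- `cset` in threshold terms. -/
def cset' (m n : ℕ) (C : Cov m (n + 1)) : Finset ℕ :=
  (Finset.range (m + 1)).filter
    (fun i => i < C.b n ∨ (1 ≤ i ∧ ¬ (i - 1 < C.b n) ∧ C.a (i - 1) ≤ n + 1))

lemma cset_toCov {m n : ℕ} (S : SatCover m (n + 1)) : cset m n S = cset' m n (toCov S) := by
  unfold cset cset'
  apply Finset.filter_congr
  intro i _
  have e1 : (toCov S).a = aOf S := rfl
  have e2 : (toCov S).b = bOf S := rfl
  rw [e1, e2]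
  have h1 : S.V i n = true ↔ i < bOf S n := V_iff S i n
  have h2 : S.V (i - 1) n = false ↔ ¬ (i - 1 < bOf S n) := by
    rw [Bool.eq_false_iff, Ne, V_iff]
  have h3 : S.H (i - 1) (n + 1) = false ↔ aOf S (i - 1) ≤ n + 1 := by
    rw [Bool.eq_false_iff, Ne, H_iff]
    omega
  rw [h1, h2, h3]

/-! ### Part 2: the compression bijection -/

lemma exists_not_mem_fin (A : Finset ℕ) : ∃ j, j ∉ A := Infinite.exists_notMem_finset A

/-- The least natural number not in `A`. -/
def Kof (A : Finset ℕ) : ℕ := Nat.find (exists_not_mem_fin A)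

lemma Kof_not_mem (A : Finset ℕ) : Kof A ∉ A := Nat.find_spec (exists_not_mem_fin A)

lemma Kof_min (A : Finset ℕ) {i : ℕ} (h : i < Kof A) : i ∈ A :=
  by_contra fun hc => Nat.find_min (exists_not_mem_fin A) h hc

lemma Kof_le {m : ℕ} {A : Finset ℕ} (hA : A ⊆ Finset.range (m + 1)) : Kof A ≤ m + 1 :=
  Nat.find_min' _ (fun h => by simpa using hA h)

lemma Kof_le' {m : ℕ} {A : Finset ℕ} (hA : A ⊂ Finset.range (m + 1)) : Kof A ≤ m := by
  obtain ⟨x, hx1, hx2⟩ := Finset.exists_of_ssubset hA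
  have := Nat.find_min' (exists_not_mem_fin A) hx2
  rw [Finset.mem_range] at hx1
  calc Kof A ≤ x := this
    _ ≤ m := by omega

lemma Kof_full (m : ℕ) : Kof (Finset.range (m + 1)) = m + 1 := by
  have h1 : Kof (Finset.range (m + 1)) ≤ m + 1 := Kof_le subset_rfl
  have h2 := Kof_not_mem (Finset.range (m + 1))
  rw [Finset.mem_range] at h2
  omega

/-- The predicate selecting the "used rows". -/
def pP (m : ℕ) (A : Finset ℕ) (i : ℕ) : Prop := i < m ∧ (i < Kof A ∨ i + 1 ∈ A)

instance (m : ℕ) (A : Finset ℕ) : DecidablePred (pP m A) :=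
  fun i => inferInstanceAs (Decidable (i < m ∧ (i < Kof A ∨ i + 1 ∈ A)))

/-- The number of used rows. -/
def mP (m : ℕ) (A : Finset ℕ) : ℕ := Nat.count (pP m A) m

/-- Rank of a row among the used rows. -/
def rk (m : ℕ) (A : Finset ℕ) : ℕ → ℕ := Nat.count (pP m A)

/-- The `t`-th used row. -/
noncomputable def sel (m : ℕ) (A : Finset ℕ) : ℕ → ℕ := Nat.nth (pP m A)

lemma pfin (m : ℕ) (A : Finset ℕ) : (setOf (pP m A)).Finite :=
  Set.Finite.subset (Set.finite_Iio m) (fun i hi => hi.1)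

lemma pcard (m : ℕ) (A : Finset ℕ) : (pfin m A).toFinset.card = mP m A := by
  rw [mP, Nat.count_eq_card_filter_range]
  congr 1
  ext x
  simp only [Set.Finite.mem_toFinset, Set.mem_setOf_eq, Finset.mem_filter, Finset.mem_range]
  exact ⟨fun h => ⟨h.1, h⟩, fun h => h.2⟩

lemma sel_mem {m : ℕ} {A : Finset ℕ} {t : ℕ} (h : t < mP m A) : pP m A (sel m A t) :=
  Nat.nth_mem_of_lt_card (pfin m A) (by rw [← pcard] at h; exact h)

lemma rk_sel {m : ℕ} {A : Finset ℕ} {t : ℕ} (h : t < mP m A) : rk m A (sel m A t) = t :=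
  Nat.count_nth_of_lt_card_finite (pfin m A) (by rw [← pcard] at h; exact h)

lemma sel_rk {m : ℕ} {A : Finset ℕ} {i : ℕ} (h : pP m A i) : sel m A (rk m A i) = i :=
  Nat.nth_count h

lemma rk_mono {m : ℕ} {A : Finset ℕ} : Monotone (rk m A) := Nat.count_monotone _

lemma rk_lt {m : ℕ} {A : Finset ℕ} {i : ℕ} (h : pP m A i) : rk m A i < mP m A := by
  have h1 : rk m A (i + 1) = rk m A i + 1 := by
    rw [rk, Nat.count_succ, if_pos h]
  have h2 : rk m A (i + 1) ≤ mP m A := rk_mono (by exact h.1)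
  omega

lemma rk_m {m : ℕ} {A : Finset ℕ} : rk m A m = mP m A := rfl

lemma sel_mono {m : ℕ} {A : Finset ℕ} {s t : ℕ} (hst : s ≤ t) (ht : t < mP m A) :
    sel m A s ≤ sel m A t :=
  Nat.nth_le_nth_of_lt_card (pfin m A) hst (by rw [← pcard] at ht; exact ht)

/-- Membership in `cset'` unfolded. -/
lemma cset'_mem {m n : ℕ} (C : Cov m (n + 1)) (i : ℕ) :
    i ∈ cset' m n C ↔
      i < m + 1 ∧ (i < C.b n ∨ (1 ≤ i ∧ ¬ (i - 1 < C.b n) ∧ C.a (i - 1) ≤ n + 1)) := by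
  rw [cset', Finset.mem_filter, Finset.mem_range]

section Facts

variable {m n : ℕ} {A : Finset ℕ} {C : Cov m (n + 1)}

lemma fact_D1 (hC : cset' m n C = A) : C.b n = Kof A := by
  by_cases hB : C.b n = m + 1
  · have hAfull : A = Finset.range (m + 1) := by
      ext i
      rw [← hC, cset'_mem, Finset.mem_range]
      constructor
      · exact fun h => h.1
      · intro h
        exact ⟨h, Or.inl (by omega)⟩
    rw [hAfull, Kof_full, hB]
  · have hBm : C.b n ≤ m := by have := C.hb n; omega
    have h1 : C.b n ∉ A := by
      rw [← hC, cset'_mem]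
      rintro ⟨-, h | ⟨h1, h2, -⟩⟩ <;> omega
    have h2 : ∀ i, i < C.b n → i ∈ A := by
      intro i hi
      rw [← hC, cset'_mem]
      exact ⟨by omega, Or.inl hi⟩
    have h3 : Kof A ≤ C.b n := Nat.find_min' _ h1
    have h4 : ¬ (Kof A < C.b n) := fun h => Kof_not_mem A (h2 _ h)
    omega

lemma fact_D2 (hC : cset' m n C = A) {i : ℕ} (h1 : Kof A ≤ i) (h2 : i < m) :
    C.a i ≤ n + 1 ↔ i + 1 ∈ A := by
  have hD1 := fact_D1 hC
  rw [← hC, cset'_mem, hD1]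
  constructor
  · intro h
    exact ⟨by omega, Or.inr ⟨by omega, by simpa using (by omega : ¬ (i < Kof A)), by simpa using h⟩⟩
  · rintro ⟨-, h | ⟨-, -, h⟩⟩
    · omega
    · simpa using h

lemma fact_D3 (hC : cset' m n C = A) {i : ℕ} (h1 : i < m) (h2 : ¬ pP m A i) :
    C.a i = n + 2 := by
  rw [pP] at h2
  push_neg at h2
  have h3 := h2 h1
  have h4 : ¬ (C.a i ≤ n + 1) := fun h => h3.2 ((fact_D2 hC h3.1 h1).1 h)
  have := C.ha i
  omega

lemma fact_D4 (hC : cset' m n C = A) {j : ℕ} (hj : j ≤ n) (hB : C.b j ≠ 0) :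
    C.b j = m + 1 ∨ pP m A (C.b j - 1) := by
  have hBm := C.hb j
  by_cases h : C.b j = m + 1
  · exact Or.inl h
  · right
    have h1 : C.b j - 1 < m := by omega
    have h2 : C.a (C.b j - 1) ≤ j + 1 := C.c1 _ j (by omega)
    by_contra hc
    have := fact_D3 hC h1 hc
    omega

end Facts

/-! ### The forward map -/

/-- Forward map: compress a cover on `[m] × [n+1]` with `cset' = A` to a cover on `[mP] × [n]`. -/
noncomputable def phiA {m n : ℕ} (A : Finset ℕ) (C : Cov m (n + 1)) (t : ℕ) : ℕ :=
  if t < mP m A then min (C.a (sel m A t)) (n + 1) else 0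

noncomputable def phiB {m n : ℕ} (A : Finset ℕ) (C : Cov m (n + 1)) (j : ℕ) : ℕ :=
  if j < n ∧ C.b j ≠ 0 then rk m A (C.b j - 1) + 1 else 0

noncomputable def Phi {m n : ℕ} {A : Finset ℕ} (C : Cov m (n + 1)) (hC : cset' m n C = A) :
    Cov (mP m A) n where
  a := phiA A C
  b := phiB A C
  ha := by
    intro t
    unfold phiA
    split
    · exact min_le_right _ _
    · omega
  ha' := by intro t h; unfold phiA; rw [if_neg (by omega)]
  hb := by
    intro j
    unfold phiB
    split
    · have h1 : C.b j - 1 ≤ m := by have := C.hb j; omega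
      have := rk_mono (m := m) (A := A) h1
      rw [rk_m] at this
      omega
    · omega
  hb' := by intro j h; unfold phiB; rw [if_neg (by omega)]
  c1 := by
    intro t j h
    unfold phiA
    unfold phiB at h
    split at h
    case isFalse => omega
    case isTrue hcond =>
      have ht : t = rk m A (C.b j - 1) := by omega
      rcases fact_D4 hC (by omega) hcond.2 with h4 | h4
      · -- C.b j = m + 1, t = rk m = mP
        have : t = mP m A := by rw [ht, h4]; rfl
        rw [if_neg (by omega)]
        omega
      · have hlt : t < mP m A := ht ▸ rk_lt h4
        rw [if_pos hlt]
        have hsel : sel m A t = C.b j - 1 := by rw [ht]; exact sel_rk h4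
        have := C.c1 (C.b j - 1) j (by omega)
        rw [hsel]
        omega
  c2 := by
    intro t j h
    unfold phiA at h
    unfold phiB
    have ht : t < mP m A := by by_contra hc; rw [if_neg hc] at h; omega
    rw [if_pos ht] at h
    by_cases hj : j < n
    · have hCa : C.a (sel m A t) = j + 1 := by omega
      have h2 := C.c2 (sel m A t) j hCa
      split
      next hcond =>
        have h3 : C.b j - 1 ≤ sel m A t := by omega
        have h4 := rk_mono (m := m) (A := A) h3
        rw [rk_sel ht] at h4
        omega
      next => omega
    · rw [if_neg (by omega)]
      omega

/-! ### The backward map -/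

/-- Backward map data. -/
noncomputable def psiA {m n : ℕ} (A : Finset ℕ) (C' : Cov (mP m A) n) (i : ℕ) : ℕ :=
  if pP m A i then
    (if C'.a (rk m A i) = n + 1 ∧ i + 1 < Kof A then n + 2 else C'.a (rk m A i))
  else if i < m then n + 2 else 0

noncomputable def psiB {m n : ℕ} (A : Finset ℕ) (C' : Cov (mP m A) n) (j : ℕ) : ℕ :=
  if j = n then Kof A
  else if C'.b j = 0 then 0
  else if C'.b j = mP m A + 1 then m + 1
  else sel m A (C'.b j - 1) + 1

/-- Backward map: decompress. -/
noncomputable def Psi {m n : ℕ} (A : Finset ℕ) (hA : A ⊆ Finset.range (m + 1))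
    (C' : Cov (mP m A) n) : Cov m (n + 1) where
  a := psiA A C'
  b := psiB A C'
  ha := by
    intro i
    unfold psiA
    have := C'.ha (rk m A i)
    split
    · split <;> omega
    · split <;> omega
  ha' := by
    intro i h
    unfold psiA
    rw [if_neg (fun hp => by have := hp.1; omega), if_neg (by omega)]
  hb := by
    intro j
    unfold psiB
    have hK := Kof_le hA
    split
    · omega
    · split
      · omega
      · split
        · omega
        · have hs : C'.b j - 1 < mP m A := by have := C'.hb j; omega
          have := (sel_mem hs).1
          omega
  hb' := by
    intro j h
    unfold psiB
    have hj : j ≠ n ∨ j = n := by omega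
    by_cases hjn : j = n
    · -- j = n is fine: n ≤ j and j = n means we return Kof A; but hb' requires j ≥ n+1 → 0
      -- careful: hb' in Cov m (n+1) : ∀ j, n + 1 ≤ j → b j = 0
      omega
    · rw [if_neg hjn, C'.hb' j (by omega), if_pos rfl]
  c1 := by
    intro i j h
    unfold psiB at h
    unfold psiA
    by_cases hjn : j = n
    · rw [if_pos hjn] at h
      -- Kof A = i + 1
      by_cases him : i < m
      · have hp : pP m A i := ⟨him, Or.inl (by omega)⟩
        rw [if_pos hp, if_neg (by rintro ⟨-, h2⟩; omega)]
        have := C'.ha (rk m A i)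
        omega
      · rw [if_neg (fun hp => by have := hp.1; omega), if_neg (by omega)]
        omega
    · rw [if_neg hjn] at h
      by_cases h0 : C'.b j = 0
      · rw [if_pos h0] at h; omega
      · rw [if_neg h0] at h
        by_cases hmax : C'.b j = mP m A + 1
        · rw [if_pos hmax] at h
          -- i = m
          have him : i = m := by omega
          rw [if_neg (fun hp => by have := hp.1; omega), if_neg (by omega)]
          omega
        · rw [if_neg hmax] at h
          have hs : C'.b j - 1 < mP m A := by have := C'.hb j; omega
          have hi : i = sel m A (C'.b j - 1) := by omega
          have hp : pP m A i := hi ▸ sel_mem hs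
          have hrk : rk m A i = C'.b j - 1 := by rw [hi]; exact rk_sel hs
          have hjltn : j < n := by
            by_contra hc
            have := C'.hb' j (by omega)
            omega
          have hc1 := C'.c1 (C'.b j - 1) j (by omega)
          rw [if_pos hp, hrk, if_neg (by rintro ⟨h1, -⟩; omega)]
          omega
  c2 := by
    intro i j h
    unfold psiA at h
    unfold psiB
    by_cases hp : pP m A i
    · rw [if_pos hp] at h
      split at h
      next hbump =>
        -- psiA = n + 2, so j = n + 1
        have hj : j = n + 1 := by omega
        rw [if_neg (by omega), C'.hb' j (by omega), if_pos rfl]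
        omega
      next hbump =>
        have hle := C'.ha (rk m A i)
        by_cases hjn : j = n
        · -- C'.a (rk i) = n+1 and no bump: Kof A ≤ i + 1
          rw [if_pos hjn]
          subst hjn
          have : ¬ (i + 1 < Kof A) := fun hc => hbump ⟨by omega, hc⟩
          omega
        · have hjlt : j < n := by omega
          have hc2 := C'.c2 (rk m A i) j (by omega)
          rw [if_neg hjn]
          by_cases h0 : C'.b j = 0
          · rw [if_pos h0]; omega
          · rw [if_neg h0]
            by_cases hmax : C'.b j = mP m A + 1
            · exfalso
              have := rk_lt hp
              omega
            · rw [if_neg hmax]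
              have hs : C'.b j - 1 < mP m A := by have := C'.hb j; omega
              have hrk := rk_lt hp
              have hmono := sel_mono (m := m) (A := A) (by omega : C'.b j - 1 ≤ rk m A i) hrk
              rw [sel_rk hp] at hmono
              omega
    · rw [if_neg hp] at h
      by_cases him : i < m
      · rw [if_pos him] at h
        have hj : j = n + 1 := by omega
        rw [if_neg (by omega), C'.hb' j (by omega), if_pos rfl]
        omega
      · rw [if_neg him] at h
        omega

/-! ### Round trips -/

lemma cset'_Psi {m n : ℕ} {A : Finset ℕ} (hA : A ⊆ Finset.range (m + 1))
    (C' : Cov (mP m A) n) : cset' m n (Psi A hA C') = A := by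
  ext i
  rw [cset'_mem]
  show i < m + 1 ∧ (i < psiB A C' n ∨ (1 ≤ i ∧ ¬ (i - 1 < psiB A C' n) ∧
      psiA A C' (i - 1) ≤ n + 1)) ↔ i ∈ A
  have hbn : psiB A C' n = Kof A := by unfold psiB; rw [if_pos rfl]
  rw [hbn]
  constructor
  · rintro ⟨him, hK | ⟨h1, h2, h3⟩⟩
    · exact Kof_min A hK
    · by_cases hp : pP m A (i - 1)
      · rcases hp.2 with h | h
        · omega
        · have : i - 1 + 1 = i := by omega
          rwa [this] at h
      · exfalso
        unfold psiA at h3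
        rw [if_neg hp, if_pos (by omega)] at h3
        omega
  · intro hiA
    have him : i < m + 1 := by have := hA hiA; rwa [Finset.mem_range] at this
    refine ⟨him, ?_⟩
    by_cases hK : i < Kof A
    · exact Or.inl hK
    · have hne : i ≠ Kof A := fun h => Kof_not_mem A (h ▸ hiA)
      right
      refine ⟨by omega, by omega, ?_⟩
      have hp : pP m A (i - 1) := by
        refine ⟨by omega, Or.inr ?_⟩
        have : i - 1 + 1 = i := by omega
        rwa [this]
      unfold psiA
      rw [if_pos hp, if_neg (by rintro ⟨-, hlt⟩; omega)]
      exact C'.ha _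

lemma Phi_Psi {m n : ℕ} {A : Finset ℕ} (hA : A ⊆ Finset.range (m + 1))
    (C' : Cov (mP m A) n) (h : cset' m n (Psi A hA C') = A) :
    Phi (Psi A hA C') h = C' := by
  apply Cov.ext'
  · funext t
    show phiA A (Psi A hA C') t = C'.a t
    unfold phiA
    by_cases ht : t < mP m A
    · rw [if_pos ht]
      have hp : pP m A (sel m A t) := sel_mem ht
      show min (psiA A C' (sel m A t)) (n + 1) = C'.a t
      unfold psiA
      rw [if_pos hp, rk_sel ht]
      have := C'.ha t
      split <;> omega
    · rw [if_neg ht]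
      rw [C'.ha' t (by omega)]
  · funext j
    show phiB A (Psi A hA C') j = C'.b j
    unfold phiB
    by_cases hj : j < n
    · have hjn : j ≠ n := by omega
      show (if j < n ∧ psiB A C' j ≠ 0 then rk m A (psiB A C' j - 1) + 1 else 0) = C'.b j
      unfold psiB
      rw [if_neg hjn]
      by_cases h0 : C'.b j = 0
      · rw [if_pos h0, if_neg (by omega), h0]
      · rw [if_neg h0]
        by_cases hmax : C'.b j = mP m A + 1
        · rw [if_pos hmax, if_pos ⟨hj, by omega⟩]
          have : m + 1 - 1 = m := by omega
          rw [this, rk_m, hmax]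
        · rw [if_neg hmax]
          have hs : C'.b j - 1 < mP m A := by have := C'.hb j; omega
          rw [if_pos ⟨hj, by omega⟩]
          have : sel m A (C'.b j - 1) + 1 - 1 = sel m A (C'.b j - 1) := by omega
          rw [this, rk_sel hs]
          omega
    · show (if j < n ∧ psiB A C' j ≠ 0 then rk m A (psiB A C' j - 1) + 1 else 0) = C'.b j
      rw [if_neg (by tauto), C'.hb' j (by omega)]

lemma Psi_Phi {m n : ℕ} {A : Finset ℕ} (hA : A ⊆ Finset.range (m + 1))
    (C : Cov m (n + 1)) (hC : cset' m n C = A) :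
    Psi A hA (Phi C hC) = C := by
  apply Cov.ext'
  · funext i
    show psiA A (Phi C hC) i = C.a i
    unfold psiA
    by_cases hp : pP m A i
    · rw [if_pos hp]
      have hrk : rk m A i < mP m A := rk_lt hp
      show (if phiA A C (rk m A i) = n + 1 ∧ i + 1 < Kof A then n + 2
        else phiA A C (rk m A i)) = C.a i
      unfold phiA
      rw [if_pos hrk, sel_rk hp]
      have hha := C.ha i
      by_cases h1 : i + 1 < Kof A
      · have hne : C.a i ≠ n + 1 := by
          intro hc
          have h2 := C.c2 i n hc
          rw [fact_D1 hC] at h2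
          omega
        split <;> omega
      · have hle : C.a i ≤ n + 1 := by
          by_cases h2 : Kof A ≤ i
          · have h3 : i + 1 ∈ A := hp.2.resolve_left (by omega)
            exact (fact_D2 hC h2 hp.1).2 h3
          · have h4 : C.b n = i + 1 := by rw [fact_D1 hC]; omega
            exact C.c1 i n h4
        rw [if_neg (by rintro ⟨-, h⟩; omega)]
        omega
    · rw [if_neg hp]
      by_cases him : i < m
      · rw [if_pos him, fact_D3 hC him hp]
      · rw [if_neg him, C.ha' i (by omega)]
  · funext j
    show psiB A (Phi C hC) j = C.b j
    unfold psiB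
    by_cases hjn : j = n
    · rw [if_pos hjn, hjn, fact_D1 hC]
    · rw [if_neg hjn]
      show (if phiB A C j = 0 then 0
        else if phiB A C j = mP m A + 1 then m + 1
        else sel m A (phiB A C j - 1) + 1) = C.b j
      by_cases hjlt : j < n
      · by_cases h0 : C.b j = 0
        · have ev : phiB A C j = 0 := by unfold phiB; rw [if_neg (by tauto)]
          rw [ev, if_pos rfl, h0]
        · have ev : phiB A C j = rk m A (C.b j - 1) + 1 := by
            unfold phiB; rw [if_pos ⟨hjlt, h0⟩]
          rcases fact_D4 hC (by omega) h0 with h4 | h4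
          · have e1 : C.b j - 1 = m := by omega
            rw [ev, e1, rk_m, if_neg (by omega), if_pos rfl, h4]
          · have hlt := rk_lt h4
            rw [ev, if_neg (by omega), if_neg (by omega)]
            have e1 : rk m A (C.b j - 1) + 1 - 1 = rk m A (C.b j - 1) := by omega
            rw [e1, sel_rk h4]
            omega
      · have ev : phiB A C j = 0 := by unfold phiB; rw [if_neg (by tauto)]
        rw [ev, if_pos rfl, C.hb' j (by omega)]

/-! ### The equivalences and cardinalities -/

noncomputable def mainEquiv (m n : ℕ) (A : Finset ℕ) (hA : A ⊆ Finset.range (m + 1)) :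
    {C : Cov m (n + 1) // cset' m n C = A} ≃ Cov (mP m A) n where
  toFun := fun C => Phi C.1 C.2
  invFun := fun C' => ⟨Psi A hA C', cset'_Psi hA C'⟩
  left_inv := fun C => Subtype.ext (Psi_Phi hA C.1 C.2)
  right_inv := fun C' => Phi_Psi hA C' _

lemma main_count (m n : ℕ) (A : Finset ℕ) (hA : A ⊆ Finset.range (m + 1)) :
    Nat.card {S : SatCover m (n + 1) // cset m n S = A} = satCount (mP m A) n := by
  have e1 : {S : SatCover m (n + 1) // cset m n S = A} ≃
      {C : Cov m (n + 1) // cset' m n C = A} :=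
    (covEquiv m (n + 1)).subtypeEquiv (fun S => by rw [cset_toCov]; exact Iff.rfl)
  rw [satCount]
  exact Nat.card_congr ((e1.trans (mainEquiv m n A hA)).trans (covEquiv (mP m A) n).symm)

lemma mP_full (m : ℕ) : mP m (Finset.range (m + 1)) = m := by
  rw [mP, Nat.count_eq_card_filter_range]
  rw [Finset.filter_true_of_mem, Finset.card_range]
  intro x hx
  rw [Finset.mem_range] at hx
  exact ⟨hx, Or.inl (by rw [Kof_full]; omega)⟩

lemma mP_proper {m : ℕ} {A : Finset ℕ} (hA : A ⊂ Finset.range (m + 1)) :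
    mP m A = A.card := by
  have hKm := Kof_le' hA
  have hsub := hA.subset
  rw [mP, Nat.count_eq_card_filter_range]
  apply Finset.card_bij (fun i _ => if i < Kof A then i else i + 1)
  · intro x hx
    rw [Finset.mem_filter] at hx
    obtain ⟨-, hxm, hor⟩ := hx
    by_cases h : x < Kof A
    · rw [if_pos h]; exact Kof_min A h
    · rw [if_neg h]
      rcases hor with h2 | h2
      · omega
      · exact h2
  · intro a ha b hb h
    split_ifs at h <;> omega
  · intro y hy
    have hym : y < m + 1 := by have := hsub hy; rwa [Finset.mem_range] at this
    by_cases h : y < Kof A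
    · refine ⟨y, ?_, ?_⟩
      · rw [Finset.mem_filter, Finset.mem_range]
        exact ⟨by omega, by omega, Or.inl h⟩
      · rw [if_pos h]
    · have hne : y ≠ Kof A := fun hc => Kof_not_mem A (hc ▸ hy)
      refine ⟨y - 1, ?_, ?_⟩
      · rw [Finset.mem_filter, Finset.mem_range]
        have : y - 1 + 1 = y := by omega
        exact ⟨by omega, by omega, Or.inr (by rwa [this])⟩
      · rw [if_neg (by omega)]
        omega

theorem stmt_14 (m n : ℕ) :
    (∀ A : Finset ℕ, A ⊂ Finset.range (m + 1) →
      Nat.card {S : SatCover m (n + 1) // cset m n S = A} = satCount A.card n) ∧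
    Nat.card {S : SatCover m (n + 1) // cset m n S = Finset.range (m + 1)} =
      satCount m n := by
  constructor
  · intro A hA
    rw [main_count m n A hA.subset, mP_proper hA]
  · rw [main_count m n (Finset.range (m + 1)) subset_rfl, mP_full]
end
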